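/- Let a > 0 and λ ∈ ℂ with Im λ ≥ 2π/a. The rank-one integral operator K on L²(μ_a) with kernel K(x,t) = -Im λ/((x - conj λ)(t - conj λ)), i.e. K f(x) = -Im λ/(x - conj λ) · ∫ f(t)/(t - conj λ) dμ_a(t), has operator norm ‖K‖ = Im λ · ‖1/(x - conj λ)‖²_{L²(μ_a)} ≤ C for a universal constant C independent of λ and a. -/

import Mathlib

open Finset Filter Topology

private lemma tele_sum (b d : ℝ) (hb : 0 < b) (hd : 0 < d) :
    HasSum (fun m : ℕ => 2*d/(b*m+d) - 2*d/(b*(m+1)+d)) 2 := by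
  have hpos : ∀ x : ℝ, 0 ≤ x → 0 < b*x+d := fun x hx => by nlinarith
  have hnn : ∀ m : ℕ, 0 ≤ 2*d/(b*m+d) - 2*d/(b*(m+1)+d) := by
    intro m
    have h1 : 0 < b*(m:ℝ)+d := hpos _ (Nat.cast_nonneg m)
    have h3 : b*(m:ℝ)+d ≤ b*((m:ℝ)+1)+d := by nlinarith
    have h4 : 2*d/(b*((m:ℝ)+1)+d) ≤ 2*d/(b*(m:ℝ)+d) :=
      div_le_div_of_nonneg_left (by positivity) h1 h3
    linarith
  rw [hasSum_iff_tendsto_nat_of_nonneg hnn]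
  have key : ∀ n : ℕ, ∑ i ∈ range n, (2*d/(b*i+d) - 2*d/(b*(i+1)+d))
      = 2 - 2*d/(b*n+d) := by
    intro n
    have h5 := Finset.sum_range_sub' (f := fun i : ℕ => 2*d/(b*(i:ℝ)+d)) n
    simp only [Nat.cast_add, Nat.cast_one] at h5
    rw [h5]
    have h6 : 2*d/(b*((0:ℕ):ℝ)+d) = 2 := by
      rw [Nat.cast_zero, mul_zero, zero_add, mul_div_assoc, div_self hd.ne', mul_one]
    rw [h6]
  simp only [key]
  have hden : Tendsto (fun n : ℕ => b*(n:ℝ)+d) atTop atTop := by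
    apply tendsto_atTop_add_const_right
    exact Tendsto.const_mul_atTop hb tendsto_natCast_atTop_atTop
  have h0 : Tendsto (fun n : ℕ => 2*d/(b*(n:ℝ)+d)) atTop (𝓝 0) := by
    simpa [div_eq_mul_inv] using (hden.inv_tendsto_atTop).const_mul (2*d)
  simpa using (tendsto_const_nhds (x := (2:ℝ))).sub h0

set_option maxHeartbeats 1000000 in
theorem stmt_18 :
    ∃ C : ℝ, 0 < C ∧ ∀ (a : ℝ) (l : ℂ), 0 < a → 2*Real.pi/a ≤ l.im →
      l.im * ∑' k : ℤ, (2*Real.pi/a) / ‖((2*Real.pi*(k:ℝ)/a : ℝ) : ℂ) - (starRingEnd ℂ) l‖^2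
        ≤ C := by
  refine ⟨6, by norm_num, ?_⟩
  intro a l ha hl
  set b : ℝ := 2*Real.pi/a with hbdef
  have hb : 0 < b := by positivity
  set d : ℝ := l.im with hddef
  set r : ℝ := l.re with hrdef
  have hd : 0 < d := lt_of_lt_of_le hb hl
  have hbd : b ≤ d := hl
  -- rewrite norms
  have hnorm : ∀ k : ℤ, ‖((2*Real.pi*(k:ℝ)/a : ℝ) : ℂ) - (starRingEnd ℂ) l‖^2
      = (b*(k:ℝ) - r)^2 + d^2 := by
    intro k
    rw [Complex.sq_norm, Complex.normSq_apply]
    simp only [Complex.sub_re, Complex.sub_im, Complex.ofReal_re, Complex.ofReal_im,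
      Complex.conj_re, Complex.conj_im]
    rw [hbdef, hddef, hrdef]
    field_simp
    ring
  -- the summand function
  set h : ℤ → ℝ := fun k => b*d/((b*(k:ℝ) - r)^2 + d^2) with hhdef
  have hterm : ∀ k : ℤ, d * ((2*Real.pi/a) / ‖((2*Real.pi*(k:ℝ)/a : ℝ) : ℂ)
      - (starRingEnd ℂ) l‖^2) = h k := by
    intro k
    rw [hnorm k, hhdef]
    ring
  rw [← tsum_mul_left]
  rw [tsum_congr hterm]
  -- the comparison sequence over ℕ
  set F : ℕ → ℝ := fun m => b*d/(b^2*(m:ℝ)^2+d^2) with hFdef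
  have hFnn : ∀ m : ℕ, 0 ≤ F m := fun m => by rw [hFdef]; positivity
  have hF0 : F 0 = b*d/d^2 := by rw [hFdef]; norm_num
  set G : ℕ → ℝ := fun m => Nat.casesOn m (b/d)
    (fun mm => 2*d/(b*mm+d) - 2*d/(b*(mm+1)+d)) with hGdef
  have hG : HasSum G (2 + b/d) := by
    have h1 : HasSum (fun m : ℕ => G (m+1)) 2 := tele_sum b d hb hd
    have h2 := (hasSum_nat_add_iff (f := G) 1).mp h1
    have h3 : HasSum G (2 + G 0) := by simpa using h2
    exact h3
  have hFG : ∀ m : ℕ, F m ≤ G m := by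
    intro m
    cases m with
    | zero =>
      have hG0 : G 0 = b/d := rfl
      rw [hF0, hG0]
      apply le_of_eq
      rw [pow_two, ← div_div, mul_div_assoc, div_self hd.ne', mul_one]
    | succ mm =>
      have hGs : G (mm+1) = 2*d/(b*(mm:ℝ)+d) - 2*d/(b*((mm:ℝ)+1)+d) := rfl
      have hFs : F (mm+1) = b*d/(b^2*((mm:ℝ)+1)^2+d^2) := by
        rw [hFdef]; push_cast; ring_nf
      rw [hFs, hGs]
      have hmm : (0:ℝ) ≤ (mm:ℝ) := Nat.cast_nonneg mm
      have p1 : (0:ℝ) < b*mm+d := by nlinarith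
      have p2 : (0:ℝ) < b*((mm:ℝ)+1)+d := by nlinarith
      rw [div_sub_div _ _ p1.ne' p2.ne', div_le_div_iff₀ (by positivity) (by positivity)]
      nlinarith [sq_nonneg (b*((mm:ℝ)+1) - d), mul_nonneg (mul_nonneg hb.le hb.le) hmm,
        mul_pos hb hd, mul_pos hb hb]
  have hFsum : Summable F := Summable.of_nonneg_of_le hFnn hFG hG.summable
  have hFle : ∑' m, F m ≤ 3 := by
    have h1 : ∑' m, F m ≤ ∑' m, G m := Summable.tsum_le_tsum hFG hFsum hG.summable
    have h2 : ∑' m, G m = 2 + b/d := hG.tsum_eq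
    have h3 : b/d ≤ 1 := (div_le_one hd).mpr hbd
    linarith
  set SF : ℝ := ∑' m, F m with hSFdef
  have hSF : HasSum F SF := hFsum.hasSum
  -- shifted sums
  have hS1 : HasSum (fun m : ℕ => F (m-1)) (SF + F 0) := by
    have h1 : HasSum (fun m : ℕ => F ((m+1)-1)) SF := by simpa using hSF
    have h2 := (hasSum_nat_add_iff (f := fun m : ℕ => F (m-1)) 1).mp h1
    simpa using h2
  have hS2 : HasSum (fun m : ℕ => F (m+1)) (SF - F 0) := by
    exact (hasSum_nat_add_iff (f := F) 1).mpr
      (show HasSum F ((SF - F 0) + ∑ i ∈ range 1, F i) by simpa using hSF)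
  have hP : HasSum (Int.rec (fun m : ℕ => F (m-1)) (fun m : ℕ => F (m+1)) : ℤ → ℝ)
      ((SF + F 0) + (SF - F 0)) := hS1.int_rec hS2
  set P : ℤ → ℝ := (Int.rec (fun m : ℕ => F (m-1)) (fun m : ℕ => F (m+1)) : ℤ → ℝ) with hPdef
  -- floor shift
  set n : ℤ := ⌊r/b⌋ with hndef
  have hn1 : b*(n:ℝ) ≤ r := by
    have h1 := Int.floor_le (r/b)
    rw [le_div_iff₀ hb] at h1
    linarith
  have hn2 : r ≤ b*((n:ℝ)+1) := by
    have h1 := (Int.lt_floor_add_one (r/b)).le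
    rw [div_le_iff₀ hb] at h1
    push_cast at h1 ⊢
    linarith
  -- termwise bound
  have hbound : ∀ j : ℤ, h (j + n) ≤ P j := by
    intro j
    match j with
    | (m : ℕ) =>
      have hPj : P (m : ℤ) = F (m-1) := rfl
      rw [hPj]
      cases m with
      | zero =>
        have hc : (((0:ℕ) + n : ℤ):ℝ) = (n:ℝ) := by push_cast; ring
        show b*d/((b*((((0:ℕ):ℤ) + n : ℤ):ℝ) - r)^2 + d^2) ≤ F (0-1)
        rw [show (0:ℕ)-1 = 0 from rfl, hF0, hc]
        apply div_le_div_of_nonneg_left (by positivity) (by positivity)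
        nlinarith [sq_nonneg (b*(n:ℝ) - r)]
      | succ mm =>
        show b*d/((b*((((mm+1:ℕ):ℤ) + n : ℤ):ℝ) - r)^2 + d^2) ≤ F ((mm+1)-1)
        have hFs : F ((mm+1)-1) = b*d/(b^2*(mm:ℝ)^2+d^2) := by
          rw [show (mm+1)-1 = mm from rfl, hFdef]
        have hc : ((((mm+1:ℕ):ℤ) + n : ℤ):ℝ) = (mm:ℝ) + 1 + (n:ℝ) := by push_cast; ring
        rw [hFs, hc]
        apply div_le_div_of_nonneg_left (by positivity) (by positivity)
        have h1 : b*(mm:ℝ) ≤ b*((mm:ℝ)+1+(n:ℝ)) - r := by nlinarith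
        have h2 : (0:ℝ) ≤ b*(mm:ℝ) := by positivity
        nlinarith [pow_le_pow_left₀ h2 h1 2]
    | Int.negSucc m =>
      have hPj : P (Int.negSucc m) = F (m+1) := rfl
      rw [hPj]
      show b*d/((b*((Int.negSucc m + n : ℤ):ℝ) - r)^2 + d^2) ≤ F (m+1)
      have hFs : F (m+1) = b*d/(b^2*((m:ℝ)+1)^2+d^2) := by
        rw [hFdef]; push_cast; ring_nf
      have hc : ((Int.negSucc m + n : ℤ):ℝ) = -((m:ℝ)+1) + (n:ℝ) := by
        push_cast [Int.cast_negSucc]; ring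
      rw [hFs, hc]
      apply div_le_div_of_nonneg_left (by positivity) (by positivity)
      have h1 : b*((m:ℝ)+1) ≤ -(b*(-((m:ℝ)+1)+(n:ℝ)) - r) := by nlinarith
      have h2 : (0:ℝ) ≤ b*((m:ℝ)+1) := by positivity
      nlinarith [pow_le_pow_left₀ h2 h1 2]
  have hshift : ∑' k : ℤ, h k = ∑' j : ℤ, h (j + n) := by
    rw [← (Equiv.addRight n).tsum_eq h]
    rfl
  rw [hshift]
  have hhnn : ∀ j : ℤ, 0 ≤ h (j + n) := fun j => by rw [hhdef]; positivity
  have hsum2 : Summable (fun j : ℤ => h (j + n)) :=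
    Summable.of_nonneg_of_le hhnn hbound hP.summable
  calc ∑' j : ℤ, h (j + n) ≤ (SF + F 0) + (SF - F 0) := by
        rw [← hP.tsum_eq]
        exact Summable.tsum_le_tsum hbound hsum2 hP.summable
    _ = 2*SF := by ring
    _ ≤ 6 := by linarith
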